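/- Every infinite P_4-word contains a square, i.e., there is no infinite square-free walk on the path P_4. -/

import Mathlib

/-- Adjacency in the path `P₄` on `{0,1,2,3}` with edges `01`, `12`, `23`. -/
def P4Adj (a b : Fin 4) : Prop := a.val + 1 = b.val ∨ b.val + 1 = a.val

def adjB (a b : Fin 4) : Bool := (a.val + 1 == b.val) || (b.val + 1 == a.val)

def hasSq (l : List (Fin 4)) : Bool :=
  (List.range l.length).any fun m =>
    (List.range (l.length + 1)).any fun k =>
      decide (0 < k) && decide (m + k + k ≤ l.length) &&
      ((List.range k).all fun i => l.getD (m + i) 0 == l.getD (m + k + i) 0)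

def good : List (Fin 4) → ℕ → Bool
  | l, 0 => hasSq l
  | l, n + 1 => hasSq l ||
      (List.finRange 4).all fun v => !adjB (l.getD (l.length - 1) 0) v || good (l ++ [v]) n

lemma good_init : ∀ a : Fin 4, good [a] 15 = true := by decide

lemma hasSq_spec (w : ℕ → Fin 4) (l : List (Fin 4))
    (hl : ∀ i < l.length, l.getD i 0 = w i) (h : hasSq l = true) :
    ∃ m k, 0 < k ∧ ∀ i < k, w (m + i) = w (m + k + i) := by
  simp only [hasSq, List.any_eq_true, List.mem_range, List.all_eq_true,
    Bool.and_eq_true, decide_eq_true_iff, beq_iff_eq] at h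
  obtain ⟨m, hm, k, hk, ⟨hk0, hle⟩, heq⟩ := h
  refine ⟨m, k, hk0, fun i hi => ?_⟩
  have h1 : m + i < l.length := by omega
  have h2 : m + k + i < l.length := by omega
  rw [← hl _ h1, ← hl _ h2]
  exact heq i hi

lemma key (w : ℕ → Fin 4) (hwalk : ∀ n, P4Adj (w n) (w (n + 1))) :
    ∀ n (l : List (Fin 4)), l ≠ [] → (∀ i < l.length, l.getD i 0 = w i) →
      good l n = true →
      ∃ m k, 0 < k ∧ ∀ i < k, w (m + i) = w (m + k + i) := by
  intro n
  induction n with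
  | zero => intro l _ hl h; exact hasSq_spec w l hl h
  | succ n ih =>
    intro l hne hl h
    rw [good, Bool.or_eq_true] at h
    rcases h with h | h
    · exact hasSq_spec w l hl h
    · have hlen : 0 < l.length := List.length_pos_iff.mpr hne
      set v := w l.length with hv
      have hlast : l.getD (l.length - 1) 0 = w (l.length - 1) := hl _ (by omega)
      have hadj : adjB (l.getD (l.length - 1) 0) v = true := by
        rw [hlast]
        have := hwalk (l.length - 1)
        have h1 : l.length - 1 + 1 = l.length := by omega
        rw [h1] at this
        rcases this with h | h <;> simp [adjB, h, hv]
      rw [List.all_eq_true] at h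
      have := h v (List.mem_finRange v)
      rw [hadj, Bool.not_true, Bool.false_or] at this
      apply ih (l ++ [v]) (by simp)
      · intro i hi
        rw [List.length_append, List.length_singleton] at hi
        rcases Nat.lt_or_ge i l.length with hi' | hi'
        · rw [List.getD_append _ _ _ _ hi']
          exact hl i hi'
        · have : i = l.length := by omega
          subst this
          simp [List.getD, hv]
      · exact this

/-- Every infinite `P₄`-word contains a square: a factor `uu` with `u` nonempty,
i.e. positions `m, k` with `0 < k` and `w (m+i) = w (m+k+i)` for all `i < k`. -/
theorem infinite_P4_word_contains_square (w : ℕ → Fin 4)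
    (hwalk : ∀ n, P4Adj (w n) (w (n + 1))) :
    ∃ m k, 0 < k ∧ ∀ i < k, w (m + i) = w (m + k + i) := by
  apply key w hwalk 15 [w 0] (by simp)
  · intro i hi
    simp only [List.length_singleton] at hi
    have : i = 0 := by omega
    subst this
    simp
  · exact good_init (w 0)
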